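/- With the setup described in the context, suppose moreover that v ∈ ℤ^N and a ∈ ℤ^r satisfy ⟨v,u_i⟩ + a_i = 0 for i = 1,…,N, and that m, m' ∈ ℤ^N both satisfy ⟨m,u_i⟩ + a_i = 0 and ⟨m',u_i⟩ + a_i = 0 for i = 1,…,N−k, together with ⟨m,u_i⟩ + a_i ≥ 0 and ⟨m',u_i⟩ + a_i ≥ 0 for all i = 1,…,r. If m − m' ∈ (q−1)·ℤ^N and y ∈ (Kˣ)^k is such that every coordinate of y^{L2} lies in the image of F under the inclusion F ⊆ K, then ∏_{i=1}^r (x(y)_i)^{⟨m,u_i⟩+a_i} = ∏_{i=1}^r (x(y)_i)^{⟨m',u_i⟩+a_i} (products computed in K with the convention 0^0 = 1). (Paper: the binomial part of the kernel description in Theorem 4.6: monomials whose exponents lie in the same face of P and are congruent modulo q−1 have equal evaluations at every rational point of the corresponding torus orbit.) -/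

import Mathlib

/-- The `N×N` submatrix of an `r×N` matrix formed by its first `N` rows. -/
def firstRows {r N : ℕ} (hNr : N ≤ r) (A : Matrix (Fin r) (Fin N) ℤ) :
    Matrix (Fin N) (Fin N) ℤ :=
  Matrix.of fun i j => A ⟨(i : ℕ), by have := i.isLt; omega⟩ j

/-- The `k×k` bottom-right block of an `N×N` matrix (rows and columns
`N-k+1, …, N`). -/
def lowerRight {N k : ℕ} (hkN : k ≤ N) (H : Matrix (Fin N) (Fin N) ℤ) :
    Matrix (Fin k) (Fin k) ℤ :=
  Matrix.of fun i j =>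
    H ⟨N - k + (i : ℕ), by have := i.isLt; omega⟩
      ⟨N - k + (j : ℕ), by have := j.isLt; omega⟩

/-- The `v`-normalized tuple `x(y) ∈ K^r` attached to `y ∈ (Kˣ)^k`. -/
def xvec {K : Type*} [Field K] {k N r : ℕ} (hkN : k ≤ N) (hNr : N ≤ r)
    (y : Fin k → Kˣ) : Fin r → K :=
  fun i =>
    if h1 : (i : ℕ) < N - k then 0
    else if h2 : (i : ℕ) < N then (y ⟨(i : ℕ) - (N - k), by omega⟩ : K)
    else 1

/- ---------- auxiliary machinery ---------- -/

/-- Embedding of the middle block indices into `Fin r`. -/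
def embR {k N r : ℕ} (hkN : k ≤ N) (hNr : N ≤ r) (j : Fin k) : Fin r :=
  ⟨N - k + (j : ℕ), by have := j.isLt; omega⟩

/-- Embedding of the bottom block indices into `Fin N`. -/
def embN {k N : ℕ} (hkN : k ≤ N) (j : Fin k) : Fin N :=
  ⟨N - k + (j : ℕ), by have := j.isLt; omega⟩

lemma embR_injective {k N r : ℕ} (hkN : k ≤ N) (hNr : N ≤ r) :
    Function.Injective (embR (k := k) hkN hNr) := by
  intro a b h
  have : N - k + (a : ℕ) = N - k + (b : ℕ) := congrArg Fin.val h
  exact Fin.ext (by omega)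

lemma embN_injective {k N : ℕ} (hkN : k ≤ N) :
    Function.Injective (embN (k := k) hkN) := by
  intro a b h
  have : N - k + (a : ℕ) = N - k + (b : ℕ) := congrArg Fin.val h
  exact Fin.ext (by omega)

lemma xvec_embR {K : Type*} [Field K] {k N r : ℕ} (hkN : k ≤ N) (hNr : N ≤ r)
    (y : Fin k → Kˣ) (j : Fin k) :
    xvec hkN hNr y (embR hkN hNr j) = (y j : K) := by
  have hj := j.isLt
  have h1 : ¬ ((embR hkN hNr j : ℕ) < N - k) := by
    show ¬ (N - k + (j : ℕ) < N - k); omega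
  have h2 : (embR hkN hNr j : ℕ) < N := by
    show N - k + (j : ℕ) < N; omega
  simp only [xvec, dif_neg h1, dif_pos h2]
  have hval : (embR hkN hNr j : ℕ) - (N - k) = (j : ℕ) := by
    show N - k + (j : ℕ) - (N - k) = (j : ℕ); omega
  exact congrArg (fun t : Fin k => ((y t : K))) (Fin.ext hval)

lemma prod_xvec_pow {K : Type*} [Field K] {k N r : ℕ} (hkN : k ≤ N) (hNr : N ≤ r)
    (y : Fin k → Kˣ) (m : Fin N → ℤ) (a : Fin r → ℤ) (A : Matrix (Fin r) (Fin N) ℤ)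
    (h0 : ∀ i : Fin r, (i : ℕ) < N - k → (∑ j : Fin N, m j * A i j) + a i = 0) :
    ∏ i : Fin r, (xvec hkN hNr y i) ^ ((∑ j : Fin N, m j * A i j) + a i).toNat
      = ∏ j : Fin k, (y j : K) ^
          ((∑ t : Fin N, m t * A (embR hkN hNr j) t) + a (embR hkN hNr j)).toNat := by
  classical
  set c : Fin r → ℤ := fun i => (∑ j : Fin N, m j * A i j) + a i with hc
  have h0' : ∀ i : Fin r, (i : ℕ) < N - k → c i = 0 := h0
  have key : ∏ i : Fin r, (xvec hkN hNr y i) ^ (c i).toNat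
      = ∏ i ∈ Finset.univ.map ⟨embR hkN hNr, embR_injective hkN hNr⟩,
          (xvec hkN hNr y i) ^ (c i).toNat := by
    refine (Finset.prod_subset (Finset.subset_univ _) ?_).symm
    intro i _ hi
    have hi' : ¬ (N - k ≤ (i : ℕ) ∧ (i : ℕ) < N) := by
      rintro ⟨ha, hb⟩
      apply hi
      simp only [Finset.mem_map, Finset.mem_univ, true_and,
        Function.Embedding.coeFn_mk]
      exact ⟨⟨(i : ℕ) - (N - k), by omega⟩,
        Fin.ext (show N - k + ((i : ℕ) - (N - k)) = (i : ℕ) by omega)⟩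
    rcases lt_or_ge (i : ℕ) (N - k) with h | h
    · rw [h0' i h]; simp
    · have hN : N ≤ (i : ℕ) := by omega
      have hx : xvec hkN hNr y i = 1 := by
        simp only [xvec]
        rw [dif_neg (by omega), dif_neg (by omega)]
      rw [hx, one_pow]
  rw [key, Finset.prod_map]
  refine Finset.prod_congr rfl fun j _ => ?_
  rw [Function.Embedding.coeFn_mk, xvec_embR]

lemma zpow_finset_sum {G : Type*} [CommGroup G] {ι : Type*} (u : G)
    (s : Finset ι) (f : ι → ℤ) : u ^ (∑ i ∈ s, f i) = ∏ i ∈ s, u ^ f i := by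
  classical
  induction s using Finset.induction_on with
  | empty => simp
  | insert _ _ h ih => rw [Finset.sum_insert h, Finset.prod_insert h, zpow_add, ih]

/-- binomial part of the kernel description, Theorem 4.6:
monomials whose exponent vectors `m, m'` lie in the same face and are congruent
modulo `q-1` take the same value at every `F_q`-rational normalized tuple. -/
theorem stmt_11 {F K : Type*} [Field F] [Fintype F] [Field K] [Algebra F K]
    [IsAlgClosure F K] {k N r : ℕ}
    (hk : 0 < k) (hkN : k ≤ N) (hNr : N ≤ r)
    (A : Matrix (Fin r) (Fin N) ℤ)
    (T : Matrix (Fin N) (Fin N) ℤ) (hT : IsUnit T.det)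
    (hlow : ∀ i j : Fin N, (i : ℕ) < (j : ℕ) → (firstRows hNr A * T) i j = 0)
    (hdet : (firstRows hNr A).det ≠ 0)
    (hchar : ∀ p : ℕ, 0 < p → CharP K p → ¬ ((p : ℤ) ∣ (firstRows hNr A).det))
    (v m m' : Fin N → ℤ) (a : Fin r → ℤ)
    (hv : ∀ i : Fin r, (i : ℕ) < N → (∑ j : Fin N, v j * A i j) + a i = 0)
    (hm0 : ∀ i : Fin r, (i : ℕ) < N - k → (∑ j : Fin N, m j * A i j) + a i = 0)
    (hm'0 : ∀ i : Fin r, (i : ℕ) < N - k → (∑ j : Fin N, m' j * A i j) + a i = 0)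
    (hm : ∀ i : Fin r, 0 ≤ (∑ j : Fin N, m j * A i j) + a i)
    (hm' : ∀ i : Fin r, 0 ≤ (∑ j : Fin N, m' j * A i j) + a i)
    (hcong : ∀ j : Fin N, ((Fintype.card F : ℤ) - 1) ∣ (m j - m' j))
    (y : Fin k → Kˣ)
    (hy : ∀ j : Fin k,
      ((∏ i : Fin k, y i ^ lowerRight hkN (firstRows hNr A * T) i j : Kˣ) : K)
        ∈ Set.range (algebraMap F K)) :
    ∏ i : Fin r, (xvec hkN hNr y i) ^ ((∑ j : Fin N, m j * A i j) + a i).toNat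
      = ∏ i : Fin r, (xvec hkN hNr y i) ^ ((∑ j : Fin N, m' j * A i j) + a i).toNat := by
  classical
  letI : Invertible T := T.invertibleOfIsUnitDet hT
  set A' : Matrix (Fin N) (Fin N) ℤ := firstRows hNr A with hA'
  set Hm : Matrix (Fin N) (Fin N) ℤ := A' * T with hHm
  set q1 : ℤ := (Fintype.card F : ℤ) - 1 with hq1
  set n : Fin N → ℤ := fun t => m t - m' t with hn
  set s : Fin N → ℤ := (⅟T).mulVec n with hs
  -- exponents in ℤ
  set cm : Fin r → ℤ := fun i => (∑ j : Fin N, m j * A i j) + a i with hcm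
  set cm' : Fin r → ℤ := fun i => (∑ j : Fin N, m' j * A i j) + a i with hcm'
  -- basic translation between A' rows and A rows
  have hA'app : ∀ (i : Fin N) (j : Fin N) (hi : (i : ℕ) < r),
      A' i j = A ⟨(i : ℕ), hi⟩ j := fun i j hi => rfl
  -- difference identity
  have hrow : ∀ (i : Fin N) (hi : (i : ℕ) < r),
      A'.mulVec n i = cm ⟨(i : ℕ), hi⟩ - cm' ⟨(i : ℕ), hi⟩ := by
    intro i hi
    simp only [Matrix.mulVec, dotProduct, hcm, hcm']
    rw [add_sub_add_right_eq_sub, ← Finset.sum_sub_distrib]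
    refine Finset.sum_congr rfl fun t _ => ?_
    have : A' i t = A ⟨(i : ℕ), hi⟩ t := rfl
    rw [this, hn]
    ring
  -- H s = A' n
  have hHsAn : Hm.mulVec s = A'.mulVec n := by
    rw [hs, Matrix.mulVec_mulVec, hHm, Matrix.mul_assoc, mul_invOf_self,
      Matrix.mul_one]
  -- first N-k coordinates of H s vanish
  have hHs0 : ∀ i : Fin N, (i : ℕ) < N - k → Hm.mulVec s i = 0 := by
    intro i hi
    have hir : (i : ℕ) < r := lt_of_lt_of_le i.isLt hNr
    rw [hHsAn, hrow i hir]
    have h1 := hm0 ⟨(i : ℕ), hir⟩ hi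
    have h2 := hm'0 ⟨(i : ℕ), hir⟩ hi
    simp only [hcm, hcm']
    omega
  -- diagonal entries of Hm are nonzero
  have hdetT : T.det ≠ 0 := hT.ne_zero
  have hdetH : Hm.det ≠ 0 := by
    rw [hHm, Matrix.det_mul]; exact mul_ne_zero hdet hdetT
  have htri : Hm.BlockTriangular OrderDual.toDual := by
    intro i j hij
    exact hlow i j hij
  have hproddiag : (∏ i : Fin N, Hm i i) ≠ 0 := by
    rw [← Matrix.det_of_lowerTriangular Hm htri]; exact hdetH
  have hdiag : ∀ i : Fin N, Hm i i ≠ 0 := fun i h =>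
    hproddiag (Finset.prod_eq_zero (Finset.mem_univ i) h)
  -- first N-k coordinates of s vanish
  have hs0 : ∀ (t : ℕ) (ht : t < N), t < N - k → s ⟨t, ht⟩ = 0 := by
    intro t
    induction t using Nat.strong_induction_on with
    | _ t ih =>
      intro ht htk
      have h1 : Hm.mulVec s ⟨t, ht⟩ = 0 := hHs0 ⟨t, ht⟩ htk
      have h2 : Hm.mulVec s ⟨t, ht⟩ = Hm ⟨t, ht⟩ ⟨t, ht⟩ * s ⟨t, ht⟩ := by
        simp only [Matrix.mulVec, dotProduct]
        apply Finset.sum_eq_single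
        · intro j _ hj
          rcases lt_trichotomy (j : ℕ) t with h | h | h
          · have hsj : s j = 0 := by
              have := ih (j : ℕ) h j.isLt (by omega)
              simpa using this
            rw [hsj, mul_zero]
          · exact absurd (Fin.ext h) hj
          · rw [hlow _ _ h, zero_mul]
        · intro h; exact absurd (Finset.mem_univ _) h
      rw [h2] at h1
      exact (mul_eq_zero.mp h1).resolve_left (hdiag _)
  have hs0' : ∀ i : Fin N, (i : ℕ) < N - k → s i = 0 := by
    intro i hi
    have := hs0 (i : ℕ) i.isLt hi
    simpa using this
  -- q1 divides every coordinate of s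
  have hdvd : ∀ t : Fin N, q1 ∣ s t := by
    intro t
    simp only [hs, Matrix.mulVec, dotProduct]
    refine Finset.dvd_sum fun u _ => ?_
    exact (hcong u).mul_left _
  -- bottom rows of H s expressed via lowerRight
  have hbot : ∀ j : Fin k, Hm.mulVec s (embN hkN j)
      = ∑ j' : Fin k, lowerRight hkN Hm j j' * s (embN hkN j') := by
    intro j
    simp only [Matrix.mulVec, dotProduct]
    have key : ∑ t : Fin N, Hm (embN hkN j) t * s t
        = ∑ t ∈ Finset.univ.map ⟨embN hkN, embN_injective hkN⟩,
            Hm (embN hkN j) t * s t := by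
      refine (Finset.sum_subset (Finset.subset_univ _) ?_).symm
      intro t _ htS
      have htk : (t : ℕ) < N - k := by
        by_contra hcon
        apply htS
        simp only [Finset.mem_map, Finset.mem_univ, true_and,
          Function.Embedding.coeFn_mk]
        have htN := t.isLt
        exact ⟨⟨(t : ℕ) - (N - k), by omega⟩,
          Fin.ext (show N - k + ((t : ℕ) - (N - k)) = (t : ℕ) by omega)⟩
      rw [hs0' t htk, mul_zero]
    rw [key, Finset.sum_map]
    refine Finset.sum_congr rfl fun j' _ => ?_
    rfl
  -- reduce both sides to products over the middle block
  rw [prod_xvec_pow hkN hNr y m a A hm0, prod_xvec_pow hkN hNr y m' a A hm'0]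
  -- pass to units
  have hcoe : ∀ (E : Fin k → ℕ),
      (∏ j : Fin k, (y j : K) ^ E j) = ((∏ j : Fin k, y j ^ E j : Kˣ) : K) := by
    intro E
    rw [Units.coe_prod]
    exact Finset.prod_congr rfl fun j _ => (Units.val_pow_eq_pow_val _ _).symm
  rw [hcoe, hcoe]
  congr 1
  -- now a statement in Kˣ
  have hnat : ∀ (c : Fin r → ℤ) (j : Fin k), 0 ≤ c (embR hkN hNr j) →
      y j ^ (c (embR hkN hNr j)).toNat = y j ^ (c (embR hkN hNr j)) := by
    intro c j hc
    rw [← zpow_natCast, Int.toNat_of_nonneg hc]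
  have keyone : (∏ j : Fin k, y j ^ (cm (embR hkN hNr j) - cm' (embR hkN hNr j))) = 1 := by
    -- the binomial vanishing: ∏ y ^ (difference) = 1
    -- difference = bottom rows of H s
    have hdiff : ∀ j : Fin k, cm (embR hkN hNr j) - cm' (embR hkN hNr j)
        = ∑ j' : Fin k, lowerRight hkN Hm j j' * s (embN hkN j') := by
      intro j
      have hjr : ((embN hkN j : ℕ)) < r := lt_of_lt_of_le (embN hkN j).isLt hNr
      have h1 := hrow (embN hkN j) hjr
      have h2 : (⟨((embN hkN j : ℕ)), hjr⟩ : Fin r) = embR hkN hNr j := rfl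
      rw [h2] at h1
      rw [← h1, ← hHsAn, hbot j]
    -- s on the bottom block is q1 times something
    choose w hw using fun j' : Fin k => hdvd (embN hkN j')
    -- each y^{L2 column} is F-rational hence killed by q1
    have hYq1 : ∀ j' : Fin k,
        (∏ i : Fin k, y i ^ lowerRight hkN Hm i j') ^ q1 = 1 := by
      intro j'
      obtain ⟨x, hx⟩ := hy j'
      have hx0 : x ≠ 0 := by
        rintro rfl
        rw [map_zero] at hx
        exact Units.ne_zero _ hx.symm
      have hxp : x ^ (Fintype.card F - 1) = 1 :=
        FiniteField.pow_card_sub_one_eq_one x hx0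
      have hvK : ((∏ i : Fin k, y i ^ lowerRight hkN Hm i j' : Kˣ) : K)
          ^ (Fintype.card F - 1) = 1 := by
        rw [← hx, ← map_pow, hxp, map_one]
      have hu : (∏ i : Fin k, y i ^ lowerRight hkN Hm i j') ^ (Fintype.card F - 1)
          = 1 := Units.ext (by push_cast; simpa using hvK)
      have hcard : (1 : ℕ) ≤ Fintype.card F := Fintype.card_pos
      have hq : q1 = ((Fintype.card F - 1 : ℕ) : ℤ) := by
        rw [hq1]; push_cast [hcard]; ring
      rw [hq, zpow_natCast, hu]
    calc ∏ j : Fin k, y j ^ (cm (embR hkN hNr j) - cm' (embR hkN hNr j))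
        = ∏ j : Fin k, y j ^ (∑ j' : Fin k, lowerRight hkN Hm j j' * s (embN hkN j')) := by
          exact Finset.prod_congr rfl fun j _ => by rw [hdiff j]
      _ = ∏ j : Fin k, ∏ j' : Fin k, (y j ^ lowerRight hkN Hm j j') ^ (s (embN hkN j')) := by
          refine Finset.prod_congr rfl fun j _ => ?_
          rw [zpow_finset_sum]
          exact Finset.prod_congr rfl fun j' _ => by rw [← zpow_mul]
      _ = ∏ j' : Fin k, (∏ j : Fin k, y j ^ lowerRight hkN Hm j j') ^ (s (embN hkN j')) := by
          rw [Finset.prod_comm]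
          exact Finset.prod_congr rfl fun j' _ => Finset.prod_zpow _ _ _
      _ = 1 := by
          refine Finset.prod_eq_one fun j' _ => ?_
          rw [hw j', zpow_mul, hYq1 j', one_zpow]
  calc ∏ j : Fin k, y j ^ ((∑ t : Fin N, m t * A (embR hkN hNr j) t)
          + a (embR hkN hNr j)).toNat
      = ∏ j : Fin k, y j ^ (cm (embR hkN hNr j)) :=
        Finset.prod_congr rfl fun j _ => hnat cm j (hm _)
    _ = ∏ j : Fin k, (y j ^ (cm (embR hkN hNr j) - cm' (embR hkN hNr j))
          * y j ^ (cm' (embR hkN hNr j))) := by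
        refine Finset.prod_congr rfl fun j _ => ?_
        rw [← zpow_add, sub_add_cancel]
    _ = (∏ j : Fin k, y j ^ (cm (embR hkN hNr j) - cm' (embR hkN hNr j)))
          * ∏ j : Fin k, y j ^ (cm' (embR hkN hNr j)) := Finset.prod_mul_distrib
    _ = ∏ j : Fin k, y j ^ (cm' (embR hkN hNr j)) := by
        rw [keyone, one_mul]
    _ = ∏ j : Fin k, y j ^ ((∑ t : Fin N, m' t * A (embR hkN hNr j) t)
          + a (embR hkN hNr j)).toNat :=
        (Finset.prod_congr rfl fun j _ => hnat cm' j (hm' _)).symm
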